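/- arXiv:1001.4504 — 3 statements merged into one kernel-verified Lean document; each statement's English description precedes it below -/
import Mathlib

section
/- Let l ≥ 2 and let L_1, …, L_l be linear forms in ℂ[x,y,z] such that any three of them are linearly independent over ℂ. Set \hat L_i = ∏_{j ≠ i} L_j for i = 1, …, l. Then the intersection of ideals ⋂_{1 ≤ i < j ≤ l} (L_i, L_j) in ℂ[x,y,z] equals the ideal (\hat L_1, …, \hat L_l) generated by the products \hat L_i. -/
open MvPolynomial Finset Matrix

noncomputable section StarAux

abbrev S3 := MvPolynomial (Fin 3) ℂ



lemma homComp1_mul (A L : S3) (hL : L.IsHomogeneous 1) :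
    homogeneousComponent 1 (A * L) = C (coeff 0 A) * L := by
  conv_lhs => rw [← sum_homogeneousComponent A, Finset.sum_mul, map_sum]
  rw [Finset.sum_eq_single 0]
  · rw [homogeneousComponent_of_mem (((homogeneousComponent_isHomogeneous 0 A).mul hL)), if_pos (by omega), homogeneousComponent_zero]
  · intro d _ hd
    rw [homogeneousComponent_of_mem (((homogeneousComponent_isHomogeneous d A).mul hL)), if_neg (by omega)]
  · intro h
    simp at h ⊢

lemma not_mem_span_pair (Li Lj Lk : S3) (hi : Li.IsHomogeneous 1) (hj : Lj.IsHomogeneous 1)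
    (hk : Lk.IsHomogeneous 1) (hind : LinearIndependent ℂ ![Li, Lj, Lk]) :
    Lk ∉ Ideal.span {Li, Lj} := by
  intro hmem
  obtain ⟨A, B, hAB⟩ := Ideal.mem_span_pair.mp hmem
  have h1 : Lk = C (coeff 0 A) * Li + C (coeff 0 B) * Lj := by
    have := congrArg (homogeneousComponent 1) hAB
    rw [map_add, homComp1_mul A Li hi, homComp1_mul B Lj hj,
      homogeneousComponent_of_mem (p := Lk) hk, if_pos rfl] at this
    exact this.symm
  have := Fintype.linearIndependent_iff.mp hind ![coeff 0 A, coeff 0 B, -1] ?_ 2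
  · rw [show (![coeff 0 A, coeff 0 B, -1] : Fin 3 → ℂ) 2 = -1 from rfl] at this
    norm_num at this
  · simp [Fin.sum_univ_three, smul_eq_C_mul]
    rw [← h1]; ring

lemma degree_one_single {m : Fin 3 →₀ ℕ} (hm : m.degree = 1) : ∃ i, m = Finsupp.single i 1 := by
  classical
  have hne : m ≠ 0 := by rintro rfl; simp [map_zero] at hm
  obtain ⟨i, hi⟩ := Finsupp.ne_iff.mp hne
  simp only [Finsupp.coe_zero, Pi.zero_apply] at hi
  have hisup : i ∈ m.support := Finsupp.mem_support_iff.mpr hi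
  have hsum : m i + ∑ j ∈ m.support.erase i, m j = 1 := by
    rw [Finset.add_sum_erase _ _ hisup]; exact hm
  have hmi : m i = 1 := by omega
  have hrest : ∑ j ∈ m.support.erase i, m j = 0 := by omega
  refine ⟨i, Finsupp.ext fun j => ?_⟩
  rcases eq_or_ne j i with rfl | hji
  · simp [hmi]
  · rw [Finsupp.single_apply, if_neg (Ne.symm hji)]
    by_contra h
    have hjsup : j ∈ m.support.erase i := Finset.mem_erase.mpr ⟨hji, Finsupp.mem_support_iff.mpr h⟩
    have := Finset.sum_eq_zero_iff.mp hrest j hjsup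
    exact h this

noncomputable def Lin (v : Fin 3 → ℂ) : S3 := ∑ j, C (v j) * X j

lemma coeff_Lin (v : Fin 3 → ℂ) (i : Fin 3) : coeff (Finsupp.single i 1) (Lin v) = v i := by
  rw [Lin, coeff_sum, Finset.sum_eq_single i]
  · simp [coeff_C_mul, coeff_X]
  · intro j _ hji
    rw [coeff_C_mul, coeff_X', if_neg, mul_zero]
    exact fun h => hji ((Finsupp.single_left_inj one_ne_zero).mp h)
  · simp

lemma Lin_isHomogeneous (v : Fin 3 → ℂ) : (Lin v).IsHomogeneous 1 := by
  refine IsHomogeneous.sum Finset.univ (fun j => C (v j) * X j) 1 fun j _ => ?_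
  show IsHomogeneous (C (v j) * X j) 1
  rw [← smul_eq_C_mul]
  exact Submodule.smul_mem (homogeneousSubmodule (Fin 3) ℂ 1) _ (isHomogeneous_X ℂ j)

lemma rep (L : S3) (hL : L.IsHomogeneous 1) : L = Lin (fun i => coeff (Finsupp.single i 1) L) := by
  apply MvPolynomial.ext
  intro m
  rcases eq_or_ne m.degree 1 with hm | hm
  · obtain ⟨i, rfl⟩ := degree_one_single hm
    rw [coeff_Lin]
  · rw [hL.coeff_eq_zero hm, (Lin_isHomogeneous _).coeff_eq_zero hm]






lemma LinM_aux : True := trivial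

noncomputable def LinM : (Fin 3 → ℂ) →ₗ[ℂ] S3 where
  toFun := Lin
  map_add' u v := by simp [Lin, add_mul, Finset.sum_add_distrib]
  map_smul' r v := by simp [Lin, Finset.mul_sum, smul_eq_C_mul, mul_assoc]

lemma LinM_apply (v : Fin 3 → ℂ) : LinM v = Lin v := rfl

lemma Lin_single (i : Fin 3) : Lin (Pi.single i 1) = X i := by
  rw [Lin, Finset.sum_eq_single i]
  · simp
  · intro j _ hji
    rw [Pi.single_apply, if_neg hji, map_zero, zero_mul]
  · simp

lemma aeval_Lin (c v : Fin 3 → ℂ) :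
    aeval (fun i => c i • Polynomial.X : Fin 3 → Polynomial ℂ) (Lin v)
      = (v ⬝ᵥ c) • Polynomial.X := by
  rw [Lin, map_sum, dotProduct, Finset.sum_smul]
  refine Finset.sum_congr rfl fun j _ => ?_
  rw [_root_.map_mul, aeval_C, aeval_X]
  simp only [Algebra.smul_def, Polynomial.algebraMap_eq, _root_.map_mul]
  ring

lemma exists_c (a b : Fin 3 → ℂ) :
    ∃ c : Fin 3 → ℂ, c ≠ 0 ∧ a ⬝ᵥ c = 0 ∧ b ⬝ᵥ c = 0 := by
  set A : Matrix (Fin 2) (Fin 3) ℂ := ![a, b] with hA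
  have hker : LinearMap.ker A.mulVecLin ≠ ⊥ := by
    apply LinearMap.ker_ne_bot_of_finrank_lt
    simp only [Module.finrank_pi, Fintype.card_fin]
    omega
  obtain ⟨c, hc, hc0⟩ := Submodule.exists_mem_ne_zero_of_ne_bot hker
  refine ⟨c, hc0, ?_, ?_⟩
  · have := congrFun (LinearMap.mem_ker.mp hc) 0
    change (A *ᵥ c) 0 = 0 at this
    simpa [Matrix.mulVec, hA] using this
  · have := congrFun (LinearMap.mem_ker.mp hc) 1
    change (A *ᵥ c) 1 = 0 at this
    simpa [Matrix.mulVec, hA] using this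

lemma exists_g (a b c : Fin 3 → ℂ) (hab : LinearIndependent ℂ ![a, b])
    (ha : a ⬝ᵥ c = 0) (hb : b ⬝ᵥ c = 0) (k : Fin 3) (hk : c k ≠ 0) :
    ∀ i : Fin 3, ∃ g : Fin 3 → ℂ,
      (Pi.single i 1 : Fin 3 → ℂ) = g 0 • a + g 1 • b + g 2 • (Pi.single k 1 : Fin 3 → ℂ) := by
  have hind : LinearIndependent ℂ ![a, b, (Pi.single k 1 : Fin 3 → ℂ)] := by
    rw [Fintype.linearIndependent_iff]
    intro g hg
    have hdot := congrArg (fun w => w ⬝ᵥ c) hg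
    simp only [Fin.sum_univ_three, Matrix.cons_val_zero, Matrix.cons_val_one, Matrix.head_cons,
      Matrix.cons_val_two, Matrix.tail_cons, add_dotProduct, smul_dotProduct,
      ha, hb, zero_dotProduct, smul_zero, zero_add, dotProduct_zero] at hdot
    have hsingle : (Pi.single k 1 : Fin 3 → ℂ) ⬝ᵥ c = c k := by
      rw [single_dotProduct, one_mul]
    rw [hsingle, smul_eq_mul] at hdot
    have hg2 : g 2 = 0 := by
      rcases mul_eq_zero.mp hdot with h | h
      · exact h
      · exact absurd h hk
    have hab' := Fintype.linearIndependent_iff.mp hab ![g 0, g 1] ?_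
    · intro i
      fin_cases i
      · exact hab' 0
      · exact hab' 1
      · exact hg2
    · rw [Fin.sum_univ_three] at hg
      rw [Fin.sum_univ_two]
      simp only [Matrix.cons_val_zero, Matrix.cons_val_one, Matrix.head_cons,
        Matrix.cons_val_two, Matrix.tail_cons, hg2, zero_smul, add_zero] at hg ⊢
      exact hg
  have hspan : Submodule.span ℂ (Set.range ![a, b, (Pi.single k 1 : Fin 3 → ℂ)]) = ⊤ := by
    apply hind.span_eq_top_of_card_eq_finrank
    simp [Module.finrank_pi]
  intro i
  have : (Pi.single i 1 : Fin 3 → ℂ)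
      ∈ Submodule.span ℂ (Set.range ![a, b, (Pi.single k 1 : Fin 3 → ℂ)]) := by
    rw [hspan]; trivial
  obtain ⟨g, hg⟩ := (Submodule.mem_span_range_iff_exists_fun ℂ).mp this
  refine ⟨g, ?_⟩
  rw [Fin.sum_univ_three] at hg
  simp only [Matrix.cons_val_zero, Matrix.cons_val_one, Matrix.head_cons, Matrix.cons_val_two,
    Matrix.tail_cons] at hg
  exact hg.symm

lemma span_pair_prime (L M : S3) (hL : L.IsHomogeneous 1) (hM : M.IsHomogeneous 1)
    (hLM : LinearIndependent ℂ ![L, M]) : (Ideal.span {L, M} : Ideal S3).IsPrime := by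
  classical
  set I : Ideal S3 := Ideal.span {L, M} with hI
  set a : Fin 3 → ℂ := fun i => coeff (Finsupp.single i 1) L with ha
  set b : Fin 3 → ℂ := fun i => coeff (Finsupp.single i 1) M with hb
  have hLa : L = Lin a := rep L hL
  have hMb : M = Lin b := rep M hM
  have hab : LinearIndependent ℂ ![a, b] := by
    apply LinearIndependent.of_comp LinM
    have : (LinM ∘ ![a, b]) = ![L, M] := by
      funext j
      fin_cases j <;> simp [LinM_apply, hLa, hMb]
    rwa [this]
  obtain ⟨c, hc0, hac, hbc⟩ := exists_c a b
  obtain ⟨k, hk⟩ := Function.ne_iff.mp hc0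
  simp only [Pi.zero_apply] at hk
  -- the evaluation map φ killing L and M
  set φ : S3 →ₐ[ℂ] Polynomial ℂ := aeval (fun i => c i • Polynomial.X) with hφ
  have hφL : φ L = 0 := by rw [hLa, hφ, aeval_Lin, hac, zero_smul]
  have hφM : φ M = 0 := by rw [hMb, hφ, aeval_Lin, hbc, zero_smul]
  have hφI : ∀ f ∈ I, φ f = 0 := by
    intro f hf
    have : I ≤ RingHom.ker (φ : S3 →+* Polynomial ℂ) := by
      rw [hI, Ideal.span_le]
      rintro x (rfl | rfl)
      · exact hφL
      · simpa using hφM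
    exact this hf
  -- coefficients expressing X i in terms of L, M, X k
  choose g hg using exists_g a b c hab hac hbc k hk
  set γ : Fin 3 → ℂ := fun i => g i 2 with hγ
  have hX : ∀ i : Fin 3, (X i : S3) = C (g i 0) * L + C (g i 1) * M + C (γ i) * X k := by
    intro i
    have h2 : LinM (Pi.single i 1 : Fin 3 → ℂ)
        = g i 0 • LinM a + g i 1 • LinM b + g i 2 • LinM (Pi.single k 1 : Fin 3 → ℂ) := by
      rw [hg i, map_add, map_add, LinM.map_smul, LinM.map_smul, LinM.map_smul]
    rw [LinM_apply, LinM_apply, LinM_apply, LinM_apply, Lin_single, Lin_single,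
      ← hLa, ← hMb] at h2
    simpa [smul_eq_C_mul] using h2
  set ρ : S3 →ₐ[ℂ] Polynomial ℂ := aeval (fun i => γ i • Polynomial.X) with hρ
  set χ : Polynomial ℂ →ₐ[ℂ] S3 := Polynomial.aeval (X k : S3) with hχ
  set ψ : S3 →ₐ[ℂ] S3 := χ.comp ρ with hψdef
  have hψX : ∀ i, ψ (X i) = C (γ i) * X k := by
    intro i
    simp only [hψdef, AlgHom.comp_apply, hρ, aeval_X]
    rw [hχ]
    simp [Algebra.smul_def, smul_eq_C_mul]
  -- f - ψ f ∈ I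
  have hsub : ∀ f : S3, f - ψ f ∈ I := by
    intro f
    set q := Ideal.Quotient.mkₐ ℂ I with hq
    have hqψ : q.comp ψ = q := by
      apply MvPolynomial.algHom_ext
      intro i
      rw [AlgHom.comp_apply, hψX i]
      conv_rhs => rw [hX i]
      have hLmem : L ∈ I := Ideal.subset_span (by simp)
      have hMmem : M ∈ I := Ideal.subset_span (by simp)
      simp only [hq, Ideal.Quotient.mkₐ_eq_mk, map_add, _root_.map_mul]
      rw [(Ideal.Quotient.eq_zero_iff_mem (I := I)).mpr hLmem,
        (Ideal.Quotient.eq_zero_iff_mem (I := I)).mpr hMmem]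
      ring
    have h3 : q (f - ψ f) = 0 := by
      have h4 : q (ψ f) = q f := by
        have := congrArg (fun h => h f) hqψ
        simpa using this
      rw [map_sub, h4, sub_self]
    rw [hq, Ideal.Quotient.mkₐ_eq_mk, Ideal.Quotient.eq_zero_iff_mem] at h3
    exact h3
  -- injectivity of φ ∘ χ
  have hinj : ∀ p : Polynomial ℂ, φ (χ p) = 0 → p = 0 := by
    intro p hp
    rw [hχ, hφ, ← Polynomial.aeval_algHom_apply] at hp
    simp only [aeval_X] at hp
    rw [show Polynomial.aeval (c k • Polynomial.X) p
        = p.comp (c k • Polynomial.X) from by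
      rw [Polynomial.aeval_def, Polynomial.comp, Polynomial.algebraMap_eq]] at hp
    rcases Polynomial.comp_eq_zero_iff.mp hp with h | ⟨_, h⟩
    · exact h
    · exfalso
      have h1 := congrArg (fun r => Polynomial.coeff r 1) h
      simp only [Polynomial.coeff_smul, Polynomial.coeff_X_one, smul_eq_mul, mul_one,
        Polynomial.coeff_C, if_neg (one_ne_zero)] at h1
      exact hk h1
  constructor
  · rw [Ideal.ne_top_iff_one]
    intro h1
    have := hφI 1 h1
    simp at this
  · intro f g hfg
    have hψfg : ψ (f * g) ∈ I := by
      have := hsub (f * g)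
      have : ψ (f * g) = f * g - (f * g - ψ (f * g)) := by ring
      rw [this]
      exact Ideal.sub_mem I hfg (hsub (f * g))
    have : φ (ψ (f * g)) = 0 := hφI _ hψfg
    rw [hψdef, AlgHom.comp_apply] at this
    have hρfg : ρ (f * g) = 0 := hinj _ this
    rw [_root_.map_mul] at hρfg
    rcases mul_eq_zero.mp hρfg with h | h
    · left
      have : ψ f = 0 := by rw [hψdef, AlgHom.comp_apply, h, map_zero]
      have h2 := hsub f
      rw [this, sub_zero] at h2
      exact h2
    · right
      have : ψ g = 0 := by rw [hψdef, AlgHom.comp_apply, h, map_zero]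
      have h2 := hsub g
      rw [this, sub_zero] at h2
      exact h2


variable {R : Type*} [CommRing R] {ι : Type*} [DecidableEq ι]

lemma star_mem_LHS (L : ι → R) (s : Finset ι) (F : R) :
    F ∈ (⨅ i ∈ s, ⨅ j ∈ s, ⨅ (_ : i ≠ j), Ideal.span {L i, L j})
      ↔ ∀ i ∈ s, ∀ j ∈ s, i ≠ j → F ∈ Ideal.span {L i, L j} := by
  simp [Ideal.mem_iInf]

lemma star_prod_span_pair (L : ι → R) (Q : R) (s : Finset ι)
    (F : R) :
    (∀ i ∈ s, (Ideal.span {L i, Q}).IsPrime) →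
    (∀ i ∈ s, ∀ j ∈ s, i ≠ j → L j ∉ Ideal.span {L i, Q}) →
    (∀ i ∈ s, F ∈ Ideal.span {L i, Q}) →
    F ∈ Ideal.span {∏ i ∈ s, L i, Q} := by
  classical
  induction s using Finset.induction_on with
  | empty =>
    intro hprime hnm hF
    rw [Finset.prod_empty]
    exact Ideal.mem_span_pair.mpr ⟨F, 0, by ring⟩
  | @insert a t ha IH =>
    intro hprime hnm hF
    have hFt : F ∈ Ideal.span {∏ i ∈ t, L i, Q} :=
      IH (fun i hi => hprime i (mem_insert_of_mem hi))
        (fun i hi j hj hij => hnm i (mem_insert_of_mem hi) j (mem_insert_of_mem hj) hij)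
        (fun i hi => hF i (mem_insert_of_mem hi))
    obtain ⟨u, v, huv⟩ := Ideal.mem_span_pair.mp hFt
    have hQmem : Q ∈ Ideal.span ({L a, Q} : Set R) := Ideal.subset_span (by simp)
    have h1 : u * ∏ i ∈ t, L i ∈ Ideal.span ({L a, Q} : Set R) := by
      have : u * ∏ i ∈ t, L i = F - v * Q := by rw [← huv]; ring
      rw [this]
      exact Ideal.sub_mem _ (hF a (mem_insert_self a t)) (Ideal.mul_mem_left _ v hQmem)
    have hprimea := hprime a (mem_insert_self a t)
    have hP : (∏ i ∈ t, L i) ∉ Ideal.span ({L a, Q} : Set R) := by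
      intro hmem
      obtain ⟨j, hj, hjmem⟩ := (Ideal.IsPrime.prod_mem_iff (hp := hprimea)).mp hmem
      exact hnm a (mem_insert_self a t) j (mem_insert_of_mem hj)
        (fun h => ha (h ▸ hj)) hjmem
    have hu : u ∈ Ideal.span ({L a, Q} : Set R) := (hprimea.mem_or_mem h1).resolve_right hP
    obtain ⟨w, z, hwz⟩ := Ideal.mem_span_pair.mp hu
    rw [Finset.prod_insert ha]
    exact Ideal.mem_span_pair.mpr ⟨w, z * ∏ i ∈ t, L i + v, by
      rw [← huv, ← hwz]; ring⟩

lemma star_ge (L : ι → R) (s : Finset ι) :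
    Ideal.span ((fun i => ∏ j ∈ s.erase i, L j) '' ↑s)
      ≤ ⨅ i ∈ s, ⨅ j ∈ s, ⨅ (_ : i ≠ j), Ideal.span {L i, L j} := by
  rw [Ideal.span_le]
  rintro x ⟨i, hi, rfl⟩
  rw [Finset.mem_coe] at hi
  rw [SetLike.mem_coe, star_mem_LHS]
  show ∀ j ∈ s, ∀ k ∈ s, j ≠ k → (∏ m ∈ s.erase i, L m) ∈ Ideal.span {L j, L k}
  intro j hj k hk hjk
  rcases eq_or_ne i j with rfl | hij'
  · have hk' : k ∈ s.erase i := mem_erase.mpr ⟨Ne.symm hjk, hk⟩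
    rw [← Finset.mul_prod_erase _ _ hk']
    exact Ideal.mul_mem_right _ _ (Ideal.subset_span (by simp))
  · have hj' : j ∈ s.erase i := mem_erase.mpr ⟨Ne.symm hij', hj⟩
    rw [← Finset.mul_prod_erase _ _ hj']
    exact Ideal.mul_mem_right _ _ (Ideal.subset_span (by simp))

lemma star_key (L : ι → R)
    (hprime : ∀ i j, i ≠ j → (Ideal.span {L i, L j}).IsPrime)
    (hnm : ∀ i j k, i ≠ j → i ≠ k → j ≠ k → L k ∉ Ideal.span {L i, L j}) :
    ∀ s : Finset ι, 2 ≤ s.card →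
      (⨅ i ∈ s, ⨅ j ∈ s, ⨅ (_ : i ≠ j), Ideal.span {L i, L j})
        = Ideal.span ((fun i => ∏ j ∈ s.erase i, L j) '' ↑s) := by
  classical
  intro s
  induction s using Finset.induction_on with
  | empty => intro h; simp at h
  | @insert a t ha IH =>
    intro hcard
    refine le_antisymm ?_ (star_ge L _)
    rcases eq_or_lt_of_le hcard with heq | hlt
    · -- card = 2 : t is a singleton
      have htcard : t.card = 1 := by
        have := Finset.card_insert_of_notMem ha
        omega
      obtain ⟨b, rfl⟩ := Finset.card_eq_one.mp htcard
      have hab : a ≠ b := by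
        intro h; apply ha; simp [h]
      intro F hF
      rw [star_mem_LHS] at hF
      have hFab := hF a (by simp) b (by simp) hab
      have h1 : L b ∈ Ideal.span ((fun i => ∏ j ∈ (insert a ({b} : Finset ι)).erase i, L j) '' ↑(insert a ({b} : Finset ι))) := by
        apply Ideal.subset_span
        refine ⟨a, by simp, ?_⟩
        show ∏ j ∈ (insert a ({b} : Finset ι)).erase a, L j = L b
        rw [Finset.erase_insert ha]
        simp
      have h2 : L a ∈ Ideal.span ((fun i => ∏ j ∈ (insert a ({b} : Finset ι)).erase i, L j) '' ↑(insert a ({b} : Finset ι))) := by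
        apply Ideal.subset_span
        refine ⟨b, by simp, ?_⟩
        show ∏ j ∈ (insert a ({b} : Finset ι)).erase b, L j = L a
        rw [Finset.erase_insert_of_ne hab, Finset.erase_singleton]
        simp
      have : Ideal.span ({L a, L b} : Set R) ≤
          Ideal.span ((fun i => ∏ j ∈ (insert a ({b} : Finset ι)).erase i, L j) '' ↑(insert a ({b} : Finset ι))) := by
        rw [Ideal.span_le]
        rintro x (rfl | rfl)
        · exact h2
        · simpa using h1
      exact this hFab
    · -- 2 ≤ t.card
      have htcard : 2 ≤ t.card := by
        have := Finset.card_insert_of_notMem ha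
        omega
      intro F hF
      rw [star_mem_LHS] at hF
      have hia : ∀ i ∈ t, i ≠ a := fun i hi h => ha (h ▸ hi)
      -- Step 1: F ∈ (∏_t L, L a)
      have hstep1 : F ∈ Ideal.span {∏ i ∈ t, L i, L a} := by
        apply star_prod_span_pair L (L a) t F
        · exact fun i hi => hprime i a (hia i hi)
        · exact fun i hi j hj hij => hnm i a j (hia i hi) hij (Ne.symm (hia j hj))
        · exact fun i hi => hF i (by simp [hi]) a (by simp) (hia i hi)
      obtain ⟨G, H, hGH⟩ := Ideal.mem_span_pair.mp hstep1
      -- Step 2: H ∈ LHS(t)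
      have hH : ∀ i ∈ t, ∀ j ∈ t, i ≠ j → H ∈ Ideal.span {L i, L j} := by
        intro i hi j hj hij
        have hGmem : G * ∏ k ∈ t, L k ∈ Ideal.span ({L i, L j} : Set R) := by
          rw [← Finset.mul_prod_erase _ _ hi, ← mul_assoc]
          exact Ideal.mul_mem_right _ _ (Ideal.mul_mem_left _ G (Ideal.subset_span (by simp)))
        have hHa : H * L a ∈ Ideal.span ({L i, L j} : Set R) := by
          have : H * L a = F - G * ∏ k ∈ t, L k := by rw [← hGH]; ring
          rw [this]
          exact Ideal.sub_mem _ (hF i (by simp [hi]) j (by simp [hj]) hij) hGmem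
        have hprimeij := hprime i j hij
        rcases hprimeij.mem_or_mem hHa with h | h
        · exact h
        · exact absurd h (hnm i j a hij (hia i hi) (hia j hj))
      have hHmem : H ∈ Ideal.span ((fun i => ∏ j ∈ t.erase i, L j) '' ↑t) := by
        rw [← IH htcard, star_mem_LHS]
        exact hH
      -- H * L a ∈ RHS(s), via span induction
      set RHS := Ideal.span ((fun i => ∏ j ∈ (insert a t).erase i, L j) '' ↑(insert a t)) with hRHS
      have hHLa : H * L a ∈ RHS := by
        have key : ∀ x ∈ Ideal.span ((fun i => ∏ j ∈ t.erase i, L j) '' ↑t),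
            x * L a ∈ RHS := by
          intro x hx
          induction hx using Submodule.span_induction with
          | mem x hmem =>
            obtain ⟨i, hi, rfl⟩ := hmem
            have : (∏ j ∈ t.erase i, L j) * L a = ∏ j ∈ (insert a t).erase i, L j := by
              rw [Finset.erase_insert_of_ne (Ne.symm (hia i hi)),
                Finset.prod_insert (fun h => ha (Finset.mem_of_mem_erase h)), mul_comm]
            rw [this]
            exact Ideal.subset_span ⟨i, by simp [hi], rfl⟩
          | zero => rw [zero_mul]; exact Ideal.zero_mem _
          | add x y _ _ hx hy => rw [add_mul]; exact Ideal.add_mem _ hx hy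
          | smul r x _ hx =>
            rw [smul_eq_mul, mul_assoc]
            exact Ideal.mul_mem_left _ r hx
        exact key H hHmem
      have hGP : G * ∏ i ∈ t, L i ∈ RHS := by
        apply Ideal.mul_mem_left
        apply Ideal.subset_span
        refine ⟨a, by simp, ?_⟩
        show ∏ j ∈ (insert a t).erase a, L j = ∏ i ∈ t, L i
        rw [Finset.erase_insert ha]
      rw [← hGH]
      exact Ideal.add_mem _ hGP hHLa

end StarAux

/-- For a star configuration given by linear forms `L 0, …, L (l-1)`
(any two linearly independent, any three linearly independent), the intersection ideal
`⋂_{i<j} (L i, L j)` equals the ideal generated by the products `L̂ i = ∏_{j ≠ i} L j`. -/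
theorem star_configuration_ideal_generators
    (l : ℕ) (hl : 2 ≤ l)
    (L : Fin l → MvPolynomial (Fin 3) ℂ)
    (hhom : ∀ i, (L i).IsHomogeneous 1)
    (hpair : ∀ i j : Fin l, i ≠ j → LinearIndependent ℂ ![L i, L j])
    (htriple : ∀ i j k : Fin l, i ≠ j → i ≠ k → j ≠ k →
      LinearIndependent ℂ ![L i, L j, L k]) :
    (⨅ (i : Fin l) (j : Fin l) (_ : i < j),
        Ideal.span {L i, L j} : Ideal (MvPolynomial (Fin 3) ℂ))
      = Ideal.span (Set.range fun i : Fin l => ∏ j ∈ Finset.univ.erase i, L j) := by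
  have hprime : ∀ i j : Fin l, i ≠ j → (Ideal.span {L i, L j}).IsPrime :=
    fun i j hij => span_pair_prime (L i) (L j) (hhom i) (hhom j) (hpair i j hij)
  have hnm : ∀ i j k : Fin l, i ≠ j → i ≠ k → j ≠ k → L k ∉ Ideal.span {L i, L j} :=
    fun i j k hij hik hjk =>
      not_mem_span_pair (L i) (L j) (L k) (hhom i) (hhom j) (hhom k) (htriple i j k hij hik hjk)
  have hkey := star_key L hprime hnm Finset.univ (by simpa using hl)
  rw [Finset.coe_univ, Set.image_univ] at hkey
  rw [← hkey]
  apply le_antisymm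
  · intro F hF
    simp only [Ideal.mem_iInf] at hF
    rw [star_mem_LHS]
    intro i _ j _ hij
    rcases hij.lt_or_gt with h | h
    · exact hF i j h
    · rw [Set.pair_comm]
      exact hF j i h
  · intro F hF
    rw [star_mem_LHS] at hF
    simp only [Ideal.mem_iInf]
    intro i j hij
    exact hF i (Finset.mem_univ i) j (Finset.mem_univ j) hij.ne
end

section
/- Let l ≥ 2 and let L_1, …, L_l be linear forms in ℂ[x,y,z] such that any three of them are linearly independent over ℂ, with associated star configuration points p_{i,j} for 1 ≤ i < j ≤ l. If F ∈ ℂ[x,y,z] is a homogeneous polynomial of degree d with d < l − 1 that vanishes at every point p_{i,j}, then F = 0. In particular, no plane curve of degree d < l − 1 contains a star configuration X(l). -/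
open MvPolynomial

namespace StarCfgAux

lemma degree_eq_sum_univ {n : ℕ} (m : Fin n →₀ ℕ) : m.degree = ∑ i, m i :=
  Finset.sum_subset (Finset.subset_univ _) (by simp +contextual [Finsupp.notMem_support_iff])

lemma exists_single_of_degree_one {m : Fin 3 →₀ ℕ} (h : m.degree = 1) :
    ∃ s, m = Finsupp.single s 1 := by
  rw [degree_eq_sum_univ, Fin.sum_univ_three] at h
  have key : ∀ s : Fin 3, m s = 1 → (∀ t, t ≠ s → m t = 0) → m = Finsupp.single s 1 := by
    intro s h1 h2
    ext t
    rcases eq_or_ne t s with rfl | ht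
    · simp [h1]
    · rw [h2 t ht, Finsupp.single_apply, if_neg (fun h => ht h.symm)]
  have h0 : m 0 = 1 ∧ m 1 = 0 ∧ m 2 = 0 ∨ m 0 = 0 ∧ m 1 = 1 ∧ m 2 = 0 ∨
      m 0 = 0 ∧ m 1 = 0 ∧ m 2 = 1 := by omega
  rcases h0 with ⟨a,b,c⟩ | ⟨a,b,c⟩ | ⟨a,b,c⟩
  · exact ⟨0, key 0 a (by intro t ht; fin_cases t <;> simp_all)⟩
  · exact ⟨1, key 1 b (by intro t ht; fin_cases t <;> simp_all)⟩
  · exact ⟨2, key 2 c (by intro t ht; fin_cases t <;> simp_all)⟩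

/-- the coefficient vector of a linear form -/
noncomputable def lin (L : MvPolynomial (Fin 3) ℂ) : Fin 3 → ℂ :=
  fun s => coeff (Finsupp.single s 1) L

lemma lin_decomp {L : MvPolynomial (Fin 3) ℂ} (h : L.IsHomogeneous 1) :
    L = ∑ s, C (lin L s) * X s := by
  ext m
  rw [coeff_sum]
  simp only [coeff_C_mul, coeff_X']
  rcases eq_or_ne m.degree 1 with hm | hm
  · obtain ⟨s, rfl⟩ := exists_single_of_degree_one hm
    rw [Finset.sum_eq_single s]
    · simp [lin]
    · intro t _ hts
      rw [if_neg, mul_zero]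
      exact fun hc => hts (by
        have := Finsupp.single_left_injective (α := Fin 3) (one_ne_zero (α := ℕ))
        exact this hc)
    · simp
  · rw [h.coeff_eq_zero hm, Finset.sum_eq_zero]
    intro s _
    rw [if_neg, mul_zero]
    intro hc
    rw [← hc, degree_eq_sum_univ] at hm
    apply hm
    simp [Finsupp.single_apply]

lemma eval_lin {L : MvPolynomial (Fin 3) ℂ} (h : L.IsHomogeneous 1) (v : Fin 3 → ℂ) :
    eval v L = ∑ s, lin L s * v s := by
  conv_lhs => rw [lin_decomp h]
  simp

lemma lin_ne_zero {L : MvPolynomial (Fin 3) ℂ} (h : L.IsHomogeneous 1) (hL : L ≠ 0) :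
    lin L ≠ 0 := by
  intro hc
  apply hL
  have hc' : ∀ s, lin L s = 0 := fun s => congrFun hc s
  rw [lin_decomp h]
  simp [hc']

lemma eval_smul_lin {L : MvPolynomial (Fin 3) ℂ} (h : L.IsHomogeneous 1) (c : ℂ) (v : Fin 3 → ℂ) :
    eval (c • v) L = c * eval v L := by
  rw [eval_lin h, eval_lin h, Finset.mul_sum]
  exact Finset.sum_congr rfl (by intros; simp; ring)

/-- the linear functional `x ↦ ∑ s, c s * x s` -/
noncomputable def dotf (c : Fin 3 → ℂ) : (Fin 3 → ℂ) →ₗ[ℂ] ℂ where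
  toFun v := ∑ s, c s * v s
  map_add' u v := by simp [mul_add, Finset.sum_add_distrib]
  map_smul' r v := by simp [Finset.mul_sum]; exact Finset.sum_congr rfl (by intros; ring)

lemma exists_common_zero (c₁ c₂ : Fin 3 → ℂ) :
    ∃ v : Fin 3 → ℂ, v ≠ 0 ∧ ∑ s, c₁ s * v s = 0 ∧ ∑ s, c₂ s * v s = 0 := by
  classical
  set ψ : (Fin 3 → ℂ) →ₗ[ℂ] (Fin 2 → ℂ) := LinearMap.pi (fun i : Fin 2 => ![dotf c₁, dotf c₂] i)
  have hker : LinearMap.ker ψ ≠ ⊥ := by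
    intro hbot
    have hinj : Function.Injective ψ := LinearMap.ker_eq_bot.1 hbot
    have := LinearMap.finrank_le_finrank_of_injective hinj
    simp [Module.finrank_pi] at this
  obtain ⟨v, hv, hv0⟩ := Submodule.exists_mem_ne_zero_of_ne_bot hker
  refine ⟨v, hv0, ?_, ?_⟩
  · have := congrFun (LinearMap.mem_ker.1 hv) 0
    simpa [ψ, dotf, LinearMap.pi_apply] using this
  · have := congrFun (LinearMap.mem_ker.1 hv) 1
    simpa [ψ, dotf, LinearMap.pi_apply] using this

lemma not_indep_triple (c₁ c₂ c₃ : Fin 3 → ℂ) (v : Fin 3 → ℂ) (hv : v ≠ 0)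
    (h1 : ∑ s, c₁ s * v s = 0) (h2 : ∑ s, c₂ s * v s = 0) (h3 : ∑ s, c₃ s * v s = 0) :
    ¬ LinearIndependent ℂ ![c₁, c₂, c₃] := by
  classical
  intro hind
  set φ : (Fin 3 → ℂ) →ₗ[ℂ] ℂ := dotf v
  obtain ⟨s₀, hs₀⟩ : ∃ s, v s ≠ 0 := Function.ne_iff.1 hv
  have hsurj : Function.Surjective φ := by
    intro y
    refine ⟨(y / v s₀) • (Pi.single s₀ 1 : Fin 3 → ℂ), ?_⟩
    simp only [φ, dotf, map_smul, LinearMap.coe_mk, AddHom.coe_mk, smul_eq_mul]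
    rw [Finset.sum_eq_single s₀] <;> simp +contextual [Pi.single_apply]
    field_simp
  have hrange : LinearMap.range φ = ⊤ := LinearMap.range_eq_top.2 hsurj
  have hkerrank : Module.finrank ℂ (LinearMap.ker φ) = 2 := by
    have h := LinearMap.finrank_range_add_finrank_ker φ
    rw [hrange] at h
    simp [Module.finrank_pi, finrank_top] at h
    omega
  have hmem : ∀ i : Fin 3, (![c₁, c₂, c₃] i) ∈ LinearMap.ker φ := by
    intro i
    have key : ∀ c : Fin 3 → ℂ, ∑ s, c s * v s = 0 → φ c = 0 := by
      intro c hc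
      simpa [φ, dotf, mul_comm] using hc
    fin_cases i
    · exact LinearMap.mem_ker.2 (key _ h1)
    · exact LinearMap.mem_ker.2 (key _ h2)
    · exact LinearMap.mem_ker.2 (key _ h3)
  set g : Fin 3 → LinearMap.ker φ := fun i => ⟨![c₁, c₂, c₃] i, hmem i⟩
  have hg : LinearIndependent ℂ g := by
    apply LinearIndependent.of_comp (LinearMap.ker φ).subtype
    exact hind
  have := hg.fintype_card_le_finrank
  rw [hkerrank] at this
  simp at this

/-- the linear map from coefficient vectors to linear forms -/
noncomputable def Tmap : (Fin 3 → ℂ) →ₗ[ℂ] MvPolynomial (Fin 3) ℂ where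
  toFun c := ∑ s, C (c s) * X s
  map_add' a b := by
    simp only [Pi.add_apply, map_add, add_mul, Finset.sum_add_distrib]
  map_smul' r a := by
    simp only [Pi.smul_apply, smul_eq_mul, RingHom.id_apply, Finset.smul_sum, map_mul,
      smul_eq_C_mul, mul_assoc]

/-- three linear forms with a common nonzero zero are linearly dependent -/
lemma not_li_forms {P Q R : MvPolynomial (Fin 3) ℂ}
    (hP : P.IsHomogeneous 1) (hQ : Q.IsHomogeneous 1) (hR : R.IsHomogeneous 1)
    {v : Fin 3 → ℂ} (hv : v ≠ 0)
    (h1 : eval v P = 0) (h2 : eval v Q = 0) (h3 : eval v R = 0) :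
    ¬ LinearIndependent ℂ ![P, Q, R] := by
  intro hind
  have hcomp : Tmap ∘ ![lin P, lin Q, lin R] = ![P, Q, R] := by
    funext i
    fin_cases i
    · exact (lin_decomp hP).symm
    · exact (lin_decomp hQ).symm
    · exact (lin_decomp hR).symm
  have hlin : LinearIndependent ℂ ![lin P, lin Q, lin R] := by
    apply LinearIndependent.of_comp Tmap
    rw [hcomp]
    exact hind
  apply not_indep_triple (lin P) (lin Q) (lin R) v hv _ _ _ hlin
  · rw [← eval_lin hP]; exact h1
  · rw [← eval_lin hQ]; exact h2
  · rw [← eval_lin hR]; exact h3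

lemma eval_aeval {n m : ℕ} (v : Fin m → ℂ) (g : Fin n → MvPolynomial (Fin m) ℂ)
    (F : MvPolynomial (Fin n) ℂ) :
    eval v (aeval g F) = eval (fun j => eval v (g j)) F := by
  rw [aeval_def, show (algebraMap ℂ (MvPolynomial (Fin m) ℂ)) = C from rfl,
    eval₂_comp_left (eval v) C g F]
  have h1 : (eval v).comp C = RingHom.id ℂ := by ext r; simp
  rw [h1]
  rfl

/-- substitution along a matrix: `X j ↦ ∑ k, M j k • X k` -/
noncomputable def subst (M : Matrix (Fin 3) (Fin 3) ℂ) :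
    MvPolynomial (Fin 3) ℂ →ₐ[ℂ] MvPolynomial (Fin 3) ℂ :=
  aeval (fun j => ∑ k, C (M j k) * X k)

lemma subst_X (M : Matrix (Fin 3) (Fin 3) ℂ) (j : Fin 3) :
    subst M (X j) = ∑ k, C (M j k) * X k := aeval_X _ _

lemma eval_subst (M : Matrix (Fin 3) (Fin 3) ℂ) (v : Fin 3 → ℂ) (F : MvPolynomial (Fin 3) ℂ) :
    eval v (subst M F) = eval (M.mulVec v) F := by
  rw [subst, eval_aeval]
  have h1 : (fun j => eval v (∑ k, C (M j k) * X k)) = M.mulVec v := by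
    funext j
    simp [Matrix.mulVec, dotProduct]
  rw [h1]

lemma subst_subst (M N : Matrix (Fin 3) (Fin 3) ℂ) (F : MvPolynomial (Fin 3) ℂ) :
    subst M (subst N F) = subst (N * M) F := by
  have h : (subst M).comp (subst N) = subst (N * M) := by
    apply MvPolynomial.algHom_ext
    intro j
    simp only [AlgHom.coe_comp, Function.comp_apply, subst_X, map_sum, map_mul, subst, aeval_C,
      aeval_X, algebraMap_eq]
    simp only [Finset.mul_sum]
    rw [Finset.sum_comm]
    refine Finset.sum_congr rfl (fun k _ => ?_)
    rw [Matrix.mul_apply, map_sum, Finset.sum_mul]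
    refine Finset.sum_congr rfl (fun x _ => ?_)
    rw [C_mul]; ring
  exact AlgHom.congr_fun h F

lemma subst_one (F : MvPolynomial (Fin 3) ℂ) : subst 1 F = F := by
  have h : subst (1 : Matrix (Fin 3) (Fin 3) ℂ) = AlgHom.id ℂ _ := by
    apply MvPolynomial.algHom_ext
    intro j
    simp [subst_X, Matrix.one_apply, apply_ite C, ite_mul]
  rw [h]; rfl

lemma subst_isHomogeneous {M : Matrix (Fin 3) (Fin 3) ℂ} {F : MvPolynomial (Fin 3) ℂ} {d : ℕ}
    (hF : F.IsHomogeneous d) : (subst M F).IsHomogeneous d := by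
  have := hF.aeval (fun j => ∑ k, C (M j k) * X k) (n := 1) (fun j => by
    apply IsHomogeneous.sum
    intro k _
    simpa using isHomogeneous_C_mul_X (M j k) k)
  simpa [subst] using this

lemma X_dvd_of_vanish (G : MvPolynomial (Fin 3) ℂ)
    (h : ∀ v : Fin 3 → ℂ, v 0 = 0 → eval v G = 0) : (X 0 : MvPolynomial (Fin 3) ℂ) ∣ G := by
  set g := finSuccEquiv ℂ 2 G with hg
  have hc : g.coeff 0 = 0 := by
    apply MvPolynomial.funext
    intro y
    have h2 := eval_eq_eval_mv_eval' y 0 G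
    rw [h _ (by simp), ← hg, ← Polynomial.coeff_zero_eq_eval_zero, Polynomial.coeff_map] at h2
    simpa using h2.symm
  obtain ⟨p, hp⟩ := Polynomial.X_dvd_iff.2 hc
  refine ⟨(finSuccEquiv ℂ 2).symm p, ?_⟩
  have h3 := congrArg (finSuccEquiv ℂ 2).symm hp
  rw [AlgEquiv.symm_apply_apply] at h3
  rw [h3, map_mul]
  congr 1
  rw [← finSuccEquiv_X_zero (R := ℂ) (n := 2), AlgEquiv.symm_apply_apply]

lemma support_degree {n : ℕ} {q : MvPolynomial (Fin n) ℂ} {D : ℕ} (hq : q.IsHomogeneous D)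
    {d : Fin n →₀ ℕ} (hd : d ∈ q.support) : ∑ i, d i = D := by
  have h1 := hq (mem_support_iff.1 hd)
  rw [← degree_eq_sum_univ, Finsupp.degree_eq_weight_one]
  exact h1

lemma eval_smul_homog {n : ℕ} {q : MvPolynomial (Fin n) ℂ} {D : ℕ} (hq : q.IsHomogeneous D)
    (μ : ℂ) (v : Fin n → ℂ) : eval (μ • v) q = μ ^ D * eval v q := by
  rw [eval_eq', eval_eq', Finset.mul_sum]
  refine Finset.sum_congr rfl (fun d hd => ?_)
  have h2 : ∀ i : Fin n, (μ • v) i ^ d i = μ ^ d i * v i ^ d i := by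
    intro i; rw [Pi.smul_apply, smul_eq_mul, mul_pow]
  simp_rw [h2]
  rw [Finset.prod_mul_distrib, Finset.prod_pow_eq_pow_sum, support_degree hq hd]
  ring

/-- a quotient of a homogeneous polynomial by a homogeneous polynomial is homogeneous -/
lemma isHomogeneous_of_mul {L H : MvPolynomial (Fin 3) ℂ} {a D : ℕ}
    (hL : L.IsHomogeneous a) (hL0 : L ≠ 0) (hF : (L * H).IsHomogeneous (a + D)) :
    H.IsHomogeneous D := by
  have hcomp : ∀ e, e ≠ D → homogeneousComponent e H = 0 := by
    intro e he
    have h1 : homogeneousComponent (a + e) (L * H) = L * homogeneousComponent e H := by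
      conv_lhs => rw [← sum_homogeneousComponent H, Finset.mul_sum, map_sum]
      rw [Finset.sum_eq_single e]
      · rw [homogeneousComponent_of_mem ((mem_homogeneousSubmodule _ _).2
          (hL.mul (homogeneousComponent_isHomogeneous e H))), if_pos rfl]
      · intro e' _ hee'
        rw [homogeneousComponent_of_mem ((mem_homogeneousSubmodule _ _).2
          (hL.mul (homogeneousComponent_isHomogeneous e' H))), if_neg (by omega)]
      · intro hnot
        rw [homogeneousComponent_eq_zero _ H (by
          simp only [Finset.mem_range, not_lt] at hnot; omega), mul_zero, map_zero]
    have h2 : homogeneousComponent (a + e) (L * H) = 0 := by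
      rw [homogeneousComponent_of_mem ((mem_homogeneousSubmodule _ _).2 hF),
        if_neg (by omega)]
    rw [h2] at h1
    rcases mul_eq_zero.1 h1.symm with h | h
    · exact absurd h hL0
    · exact h
  have hH : H = homogeneousComponent D H := by
    conv_lhs => rw [← sum_homogeneousComponent H]
    rw [Finset.sum_eq_single D]
    · intro e' _ he'; exact hcomp e' he'
    · intro hnot
      exact homogeneousComponent_eq_zero _ H (by
        simp only [Finset.mem_range, not_lt] at hnot; omega)
  rw [hH]
  exact homogeneousComponent_isHomogeneous D H

lemma single_eq_of (d : Fin 2 →₀ ℕ) {D : ℕ} (h0 : d 0 = D) (h1 : d 1 = 0) :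
    d = Finsupp.single 0 D := by
  ext t
  fin_cases t
  · simpa using h0
  · simpa [Finsupp.single_apply] using h1

lemma binary_vanish {D : ℕ} {q : MvPolynomial (Fin 2) ℂ} (hq : q.IsHomogeneous D)
    {ι : Type*} [DecidableEq ι] (T : Finset ι) (y : ι → Fin 2 → ℂ)
    (hcard : D + 1 ≤ T.card)
    (hy0 : ∀ j ∈ T, y j ≠ 0)
    (hprop : ∀ j ∈ T, ∀ k ∈ T, j ≠ k → ∀ μ : ℂ, y k ≠ μ • y j)
    (hvan : ∀ j ∈ T, ∀ μ : ℂ, μ ≠ 0 → eval (μ • y j) q = 0) :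
    ∀ v : Fin 2 → ℂ, eval v q = 0 := by
  classical
  set P : Polynomial ℂ := eval₂ Polynomial.C ![Polynomial.X, 1] q with hP
  have hPeval : ∀ a : ℂ, P.eval a = eval ![a, 1] q := by
    intro a
    have h1 : Polynomial.eval a P =
        (Polynomial.evalRingHom a) (eval₂ Polynomial.C ![Polynomial.X, 1] q) := rfl
    rw [h1, eval₂_comp_left]
    have h2 : (Polynomial.evalRingHom a).comp Polynomial.C = RingHom.id ℂ := by ext r; simp
    have h3 : ((Polynomial.evalRingHom a) ∘ ![Polynomial.X, 1]) = ![a, 1] := by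
      funext t; fin_cases t <;> simp
    rw [h2, h3]
    rfl
  have hdeg : P.natDegree ≤ D := by
    rw [hP, eval₂_eq']
    apply Polynomial.natDegree_sum_le_of_forall_le
    intro d hd
    have hsum := support_degree hq hd
    rw [Fin.sum_univ_two] at hsum
    have h4 : (∏ i, (![Polynomial.X, (1 : Polynomial ℂ)]) i ^ d i) = Polynomial.X ^ d 0 := by
      rw [Fin.prod_univ_two]; simp
    rw [h4]
    refine (Polynomial.natDegree_C_mul_le _ _).trans ?_
    rw [Polynomial.natDegree_X_pow]
    omega
  have hPcoeff : P.coeff D = coeff (Finsupp.single 0 D) q := by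
    rw [hP, eval₂_eq', Polynomial.finset_sum_coeff]
    rw [Finset.sum_eq_single (Finsupp.single (0 : Fin 2) D)]
    · simp [Fin.prod_univ_two, Polynomial.coeff_X_pow]
    · intro b hb hbne
      have hsum := support_degree hq hb
      rw [Fin.sum_univ_two] at hsum
      have hb0 : b 0 ≠ D := by
        intro hc
        exact hbne (single_eq_of b hc (by omega))
      rw [Fin.prod_univ_two]
      simp only [Matrix.cons_val_zero, Matrix.cons_val_one, Matrix.head_cons, one_pow, mul_one,
        Polynomial.coeff_C_mul, Polynomial.coeff_X_pow]
      rw [if_neg (fun h => hb0 h.symm), mul_zero]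
    · intro hns
      rw [notMem_support_iff.1 hns]
      simp
  have h10 : eval ![(1 : ℂ), 0] q = coeff (Finsupp.single 0 D) q := by
    rw [eval_eq']
    rw [Finset.sum_eq_single (Finsupp.single (0 : Fin 2) D)]
    · simp [Fin.prod_univ_two]
    · intro b hb hbne
      have hsum := support_degree hq hb
      rw [Fin.sum_univ_two] at hsum
      have hb1 : b 1 ≠ 0 := by
        intro hc
        exact hbne (single_eq_of b (by omega) hc)
      rw [Fin.prod_univ_two]
      simp [Matrix.cons_val_one, zero_pow hb1]
    · intro hns
      rw [notMem_support_iff.1 hns]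
      simp
  have hroot : ∀ j ∈ T, y j 1 ≠ 0 → P.eval (y j 0 / y j 1) = 0 := by
    intro j hj hj1
    rw [hPeval]
    have h5 : ![y j 0 / y j 1, 1] = (y j 1)⁻¹ • y j := by
      funext t
      fin_cases t
      · simp [div_eq_inv_mul]
      · simp [inv_mul_cancel₀ hj1]
    rw [h5]
    exact hvan j hj _ (inv_ne_zero hj1)
  have hinj : ∀ j ∈ T, ∀ k ∈ T, y j 1 ≠ 0 → y k 1 ≠ 0 →
      y j 0 / y j 1 = y k 0 / y k 1 → j = k := by
    intro j hj k hk hj1 hk1 heq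
    by_contra hjk
    apply hprop j hj k hk hjk (y k 1 / y j 1)
    rw [div_eq_div_iff hj1 hk1] at heq
    funext t
    fin_cases t
    · show y k 0 = y k 1 / y j 1 * y j 0
      field_simp
      linear_combination -heq
    · show y k 1 = y k 1 / y j 1 * y j 1
      field_simp
  have hP0 : P = 0 := by
    by_cases hex : ∃ j ∈ T, y j 1 = 0
    · obtain ⟨j0, hj0, hj01⟩ := hex
      rcases eq_or_ne P 0 with h | hPn
      · exact h
      have hcD : P.coeff D = 0 := by
        rw [hPcoeff, ← h10]
        have ha : y j0 0 ≠ 0 := by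
          intro hc
          apply hy0 j0 hj0
          funext t; fin_cases t
          · exact hc
          · exact hj01
        have h6 : ((y j0 0)⁻¹ • y j0) = ![(1 : ℂ), 0] := by
          funext t; fin_cases t
          · simp [inv_mul_cancel₀ ha]
          · simp [hj01]
        rw [← h6]
        exact hvan j0 hj0 _ (inv_ne_zero ha)
      have hnd : P.natDegree < D := by
        rcases lt_or_eq_of_le hdeg with h | h
        · exact h
        · exfalso
          apply hPn
          rw [← Polynomial.leadingCoeff_eq_zero, Polynomial.leadingCoeff, h]
          exact hcD
      have hS1 : ∀ j ∈ T.erase j0, y j 1 ≠ 0 := by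
        intro j hjS hc
        have hjT := Finset.mem_of_mem_erase hjS
        have hjne := Finset.ne_of_mem_erase hjS
        have ha : y j0 0 ≠ 0 := by
          intro hc2
          exact hy0 j0 hj0 (by funext t; fin_cases t; exacts [hc2, hj01])
        apply hprop j0 hj0 j hjT (fun h => hjne h.symm) (y j 0 / y j0 0)
        funext t; fin_cases t
        · show y j 0 = y j 0 / y j0 0 * y j0 0
          field_simp
        · show y j 1 = y j 0 / y j0 0 * y j0 1
          rw [hc, hj01, mul_zero]
      apply Polynomial.eq_zero_of_natDegree_lt_card_of_eval_eq_zero' P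
        ((T.erase j0).image (fun j => y j 0 / y j 1))
      · intro x hx
        obtain ⟨j, hjS, rfl⟩ := Finset.mem_image.1 hx
        exact hroot j (Finset.mem_of_mem_erase hjS) (hS1 j hjS)
      · rw [Finset.card_image_of_injOn (fun j hjS k hkS heq =>
          hinj j (Finset.mem_of_mem_erase hjS) k (Finset.mem_of_mem_erase hkS)
            (hS1 j hjS) (hS1 k hkS) heq)]
        rw [Finset.card_erase_of_mem hj0]
        omega
    · push_neg at hex
      apply Polynomial.eq_zero_of_natDegree_lt_card_of_eval_eq_zero' P
        (T.image (fun j => y j 0 / y j 1))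
      · intro x hx
        obtain ⟨j, hjT, rfl⟩ := Finset.mem_image.1 hx
        exact hroot j hjT (hex j hjT)
      · rw [Finset.card_image_of_injOn (fun j hjT k hkT heq =>
          hinj j hjT k hkT (hex j hjT) (hex k hkT) heq)]
        omega
  have h1 : ∀ a : ℂ, eval ![a, 1] q = 0 := by
    intro a
    rw [← hPeval, hP0, Polynomial.eval_zero]
  have hb : ∀ a b : ℂ, b ≠ 0 → eval ![a, b] q = 0 := by
    intro a b hbne
    have h7 : ![a, b] = b • ![a / b, 1] := by
      funext t; fin_cases t
      · show a = b * (a / b); field_simp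
      · show b = b * 1; ring
    rw [h7, eval_smul_homog hq, h1, mul_zero]
  have hzero : ∀ a : ℂ, eval ![a, (0 : ℂ)] q = 0 := by
    intro a
    set Rq : Polynomial ℂ := eval₂ Polynomial.C ![Polynomial.C a, Polynomial.X] q with hRq
    have hReval : ∀ b : ℂ, Rq.eval b = eval ![a, b] q := by
      intro b
      have h1' : Polynomial.eval b Rq =
          (Polynomial.evalRingHom b) (eval₂ Polynomial.C ![Polynomial.C a, Polynomial.X] q) := rfl
      rw [h1', eval₂_comp_left]
      have h2' : (Polynomial.evalRingHom b).comp Polynomial.C = RingHom.id ℂ := by ext r; simp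
      have h3' : ((Polynomial.evalRingHom b) ∘ ![Polynomial.C a, Polynomial.X]) = ![a, b] := by
        funext t; fin_cases t <;> simp
      rw [h2', h3']
      rfl
    have hR0 : Rq = 0 := by
      apply Polynomial.eq_zero_of_infinite_isRoot
      apply Set.Infinite.mono (s := {(0 : ℂ)}ᶜ)
      · intro b hbc
        have hbne : b ≠ 0 := hbc
        simp only [Set.mem_setOf_eq, Polynomial.IsRoot.def]
        rw [hReval]
        exact hb a b hbne
      · exact (Set.finite_singleton 0).infinite_compl
    rw [← hReval 0, hR0, Polynomial.eval_zero]
  intro v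
  have hv : v = ![v 0, v 1] := by
    funext t; fin_cases t <;> rfl
  rw [hv]
  rcases eq_or_ne (v 1) 0 with h | h
  · rw [h]; exact hzero _
  · exact hb _ _ h

lemma exists_matrix_row (c : Fin 3 → ℂ) (hc : c ≠ 0) :
    ∃ Cm : Matrix (Fin 3) (Fin 3) ℂ, IsUnit Cm.det ∧ ∀ k, Cm 0 k = c k := by
  obtain ⟨s, hs⟩ := Function.ne_iff.1 hc
  fin_cases s
  · refine ⟨!![c 0, c 1, c 2; 0, 1, 0; 0, 0, 1], ?_, ?_⟩
    · have h : (!![c 0, c 1, c 2; 0, 1, 0; 0, 0, 1]).det = c 0 := by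
        rw [Matrix.det_fin_three]
        norm_num
        simp [Matrix.cons_val]
      rw [h]
      exact isUnit_iff_ne_zero.2 (by simpa using hs)
    · intro k; fin_cases k <;> rfl
  · refine ⟨!![c 0, c 1, c 2; 1, 0, 0; 0, 0, 1], ?_, ?_⟩
    · have h : (!![c 0, c 1, c 2; 1, 0, 0; 0, 0, 1]).det = -c 1 := by
        rw [Matrix.det_fin_three]
        norm_num
        simp [Matrix.cons_val]
      rw [h]
      exact isUnit_iff_ne_zero.2 (neg_ne_zero.2 (by simpa using hs))
    · intro k; fin_cases k <;> rfl
  · refine ⟨!![c 0, c 1, c 2; 1, 0, 0; 0, 1, 0], ?_, ?_⟩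
    · have h : (!![c 0, c 1, c 2; 1, 0, 0; 0, 1, 0]).det = c 2 := by
        rw [Matrix.det_fin_three]
        norm_num
        simp [Matrix.cons_val]
      rw [h]
      exact isUnit_iff_ne_zero.2 (by simpa using hs)
    · intro k; fin_cases k <;> rfl

lemma homog_zero_eq_C {F : MvPolynomial (Fin 3) ℂ} (hF : F.IsHomogeneous 0) :
    F = C (coeff 0 F) := by
  ext m
  rcases eq_or_ne m 0 with rfl | hm
  · simp
  · rw [hF.coeff_eq_zero (by rwa [Ne, Finsupp.degree_eq_zero_iff]), coeff_C,
      if_neg (fun h => hm h.symm)]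

/-- The main induction. -/
lemma main_aux : ∀ (d l : ℕ), 2 ≤ l → ∀ L : Fin l → MvPolynomial (Fin 3) ℂ,
    (∀ i, (L i).IsHomogeneous 1) →
    (∀ i j : Fin l, i ≠ j → LinearIndependent ℂ ![L i, L j]) →
    (∀ i j k : Fin l, i ≠ j → i ≠ k → j ≠ k → LinearIndependent ℂ ![L i, L j, L k]) →
    d < l - 1 → ∀ F : MvPolynomial (Fin 3) ℂ, F.IsHomogeneous d →
    (∀ i j : Fin l, i ≠ j → ∀ v : Fin 3 → ℂ, v ≠ 0 →
      eval v (L i) = 0 → eval v (L j) = 0 → eval v F = 0) →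
    F = 0 := by
  intro d
  induction d with
  | zero =>
    intro l hl L hhom hpair htriple hd F hF hvan
    have i0 : Fin l := ⟨0, by omega⟩
    have i1 : Fin l := ⟨1, by omega⟩
    obtain ⟨v, hv0, h1, h2⟩ := exists_common_zero (lin (L ⟨0, by omega⟩)) (lin (L ⟨1, by omega⟩))
    have hne : (⟨0, by omega⟩ : Fin l) ≠ ⟨1, by omega⟩ := by
      intro h; exact absurd (Fin.mk.injEq .. ▸ h) (by simp)
    have hvan0 := hvan ⟨0, by omega⟩ ⟨1, by omega⟩ hne v hv0
      (by rw [eval_lin (hhom _)]; exact h1) (by rw [eval_lin (hhom _)]; exact h2)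
    rw [homog_zero_eq_C hF] at hvan0 ⊢
    rw [eval_C] at hvan0
    rw [hvan0, map_zero]
  | succ d ih =>
    intro l hl L hhom hpair htriple hd F hF hvan
    have hl3 : 3 ≤ l := by omega
    set i0 : Fin l := ⟨0, by omega⟩ with hi0
    have hL0 : L i0 ≠ 0 := by
      have h := (hpair i0 ⟨1, by omega⟩ (by
        intro h; exact absurd (Fin.mk.injEq .. ▸ h) (by simp))).ne_zero 0
      simpa using h
    set c : Fin 3 → ℂ := lin (L i0) with hcdef
    have hcne : c ≠ 0 := lin_ne_zero (hhom i0) hL0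
    obtain ⟨Cm, hdet, hrow⟩ := exists_matrix_row c hcne
    set Bm : Matrix (Fin 3) (Fin 3) ℂ := Cm⁻¹ with hBm
    have hCB : Cm * Bm = 1 := Matrix.mul_nonsing_inv Cm hdet
    have hBC : Bm * Cm = 1 := Matrix.nonsing_inv_mul Cm hdet
    have hrec : ∀ x : Fin 3 → ℂ, Bm.mulVec (Cm.mulVec x) = x := by
      intro x
      rw [Matrix.mulVec_mulVec, hBC, Matrix.one_mulVec]
    -- choose points
    have hex : ∀ j : Fin l, ∃ v : Fin 3 → ℂ, v ≠ 0 ∧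
        ∑ s, c s * v s = 0 ∧ ∑ s, lin (L j) s * v s = 0 :=
      fun j => exists_common_zero c (lin (L j))
    choose v hvne hvc hvj using hex
    have hevi0 : ∀ j, eval (v j) (L i0) = 0 := by
      intro j; rw [eval_lin (hhom i0)]; exact hvc j
    have hevj : ∀ j, eval (v j) (L j) = 0 := by
      intro j; rw [eval_lin (hhom j)]; exact hvj j
    set G : MvPolynomial (Fin 3) ℂ := subst Bm F with hG
    have hGhom : G.IsHomogeneous (d + 1) := subst_isHomogeneous hF
    set q : MvPolynomial (Fin 2) ℂ := aeval ![0, X 0, X 1] G with hqdef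
    have hqhom : q.IsHomogeneous (d + 1) := by
      have := hGhom.aeval (![0, X 0, X 1] : Fin 3 → MvPolynomial (Fin 2) ℂ) (n := 1) (fun j => by
        fin_cases j
        · simpa using isHomogeneous_zero (Fin 2) ℂ 1
        · simpa using isHomogeneous_X ℂ (0 : Fin 2)
        · simpa using isHomogeneous_X ℂ (1 : Fin 2))
      simpa [hqdef] using this
    have hqeval : ∀ u : Fin 2 → ℂ, eval u q = eval ![0, u 0, u 1] G := by
      intro u
      rw [hqdef, eval_aeval]
      have harg : (fun j => eval u ((![0, X 0, X 1] : Fin 3 → MvPolynomial (Fin 2) ℂ) j))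
          = ![0, u 0, u 1] := by
        funext s
        fin_cases s <;> simp
      rw [harg]
    set w : Fin l → Fin 3 → ℂ := fun j => Cm.mulVec (v j) with hw
    have hw0 : ∀ j, w j 0 = 0 := by
      intro j
      show (Cm.mulVec (v j)) 0 = 0
      rw [Matrix.mulVec, dotProduct]
      rw [← hvc j]
      exact Finset.sum_congr rfl (fun s _ => by rw [hrow s])
    have hwne : ∀ j, w j ≠ 0 := by
      intro j hcon
      apply hvne j
      rw [← hrec (v j)]
      show Bm.mulVec (w j) = 0
      rw [hcon, Matrix.mulVec_zero]
    set y : Fin l → Fin 2 → ℂ := fun j => ![w j 1, w j 2] with hy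
    set T : Finset (Fin l) := Finset.univ.erase i0 with hT
    have hTcard : T.card = l - 1 := by
      rw [hT, Finset.card_erase_of_mem (Finset.mem_univ _), Finset.card_univ, Fintype.card_fin]
    have hmemT : ∀ j ∈ T, j ≠ i0 := fun j hj => Finset.ne_of_mem_erase hj
    -- nonzero
    have hy0 : ∀ j ∈ T, y j ≠ 0 := by
      intro j _ hcon
      apply hwne j
      funext t
      fin_cases t
      · show w j 0 = 0
        exact hw0 j
      · show w j 1 = 0
        exact congrFun hcon 0
      · show w j 2 = 0
        exact congrFun hcon 1
    -- scaled w equality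
    have hwy : ∀ (j : Fin l) (μ : ℂ), ![(0 : ℂ), μ * (y j 0), μ * (y j 1)] = μ • w j := by
      intro j μ
      funext t
      fin_cases t
      · show (0 : ℂ) = (μ • w j) 0
        rw [Pi.smul_apply, smul_eq_mul, hw0 j, mul_zero]
      · show μ * (y j 0) = (μ • w j) 1
        rfl
      · show μ * (y j 1) = (μ • w j) 2
        rfl
    -- vanishing
    have hvanq : ∀ j ∈ T, ∀ μ : ℂ, μ ≠ 0 → eval (μ • y j) q = 0 := by
      intro j hj μ hμ
      rw [hqeval]
      have h8 : ![(0 : ℂ), (μ • y j) 0, (μ • y j) 1] = μ • w j := hwy j μ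
      rw [h8, hG, eval_subst, Matrix.mulVec_smul, hrec]
      apply hvan i0 j (fun h => hmemT j hj h.symm) _ (smul_ne_zero hμ (hvne j))
      · rw [eval_smul_lin (hhom i0), hevi0, mul_zero]
      · rw [eval_smul_lin (hhom j), hevj, mul_zero]
    -- non-proportional
    have hpropq : ∀ j ∈ T, ∀ k ∈ T, j ≠ k → ∀ μ : ℂ, y k ≠ μ • y j := by
      intro j hj k hk hjk μ hcon
      have hwk : w k = μ • w j := by
        funext t
        fin_cases t
        · show w k 0 = (μ • w j) 0
          rw [hw0 k, Pi.smul_apply, smul_eq_mul, hw0 j, mul_zero]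
        · show w k 1 = (μ • w j) 1
          exact congrFun hcon 0
        · show w k 2 = (μ • w j) 2
          exact congrFun hcon 1
      have hvk : v k = μ • v j := by
        rw [← hrec (v k)]
        show Bm.mulVec (w k) = μ • v j
        rw [hwk, Matrix.mulVec_smul, hrec]
      have hμ : μ ≠ 0 := by
        intro hc
        apply hvne k
        rw [hvk, hc, zero_smul]
      apply not_li_forms (hhom i0) (hhom j) (hhom k) (hvne k)
        (hevi0 k) _ (hevj k)
        (htriple i0 j k (fun h => hmemT j hj h.symm) (fun h => hmemT k hk h.symm) hjk)
      rw [hvk, eval_smul_lin (hhom j), hevj, mul_zero]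
    -- binary lemma
    have hq0 : ∀ u : Fin 2 → ℂ, eval u q = 0 :=
      binary_vanish hqhom T y (by omega) hy0 hpropq hvanq
    -- X 0 divides G
    have hGvan : ∀ u : Fin 3 → ℂ, u 0 = 0 → eval u G = 0 := by
      intro u hu
      have h9 : u = ![(0 : ℂ), u 1, u 2] := by
        funext t
        fin_cases t
        · exact hu
        · rfl
        · rfl
      have h10 := hqeval ![u 1, u 2]
      simp only [Matrix.cons_val_zero, Matrix.cons_val_one, Matrix.head_cons] at h10
      rw [h9, ← h10]
      exact hq0 _
    obtain ⟨H', hH'⟩ := X_dvd_of_vanish G hGvan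
    -- factor F
    have hFG : F = subst Cm G := by
      rw [hG, subst_subst, hBC, subst_one]
    have hsubX : subst Cm (X 0) = L i0 := by
      rw [subst_X]
      conv_rhs => rw [lin_decomp (hhom i0)]
      exact Finset.sum_congr rfl (fun k _ => by rw [hrow k])
    set H₁ : MvPolynomial (Fin 3) ℂ := subst Cm H' with hH₁
    have hfact : F = L i0 * H₁ := by
      rw [hFG, hH', map_mul, hsubX]
    have hH₁hom : H₁.IsHomogeneous d := by
      apply isHomogeneous_of_mul (hhom i0) hL0
      rw [← hfact]
      have : 1 + d = d + 1 := by omega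
      rw [this]
      exact hF
    -- restriction to the remaining lines
    have hsucc : (l - 1) + 1 = l := by omega
    set emb : Fin (l - 1) → Fin l := fun i => Fin.cast hsucc i.succ with hemb
    have hembinj : ∀ i j : Fin (l - 1), emb i = emb j → i = j := by
      intro i j h
      have := congrArg Fin.val h
      simp only [hemb, Fin.coe_cast, Fin.val_succ] at this
      exact Fin.ext (by omega)
    have hembne : ∀ i : Fin (l - 1), emb i ≠ i0 := by
      intro i h
      have := congrArg Fin.val h
      simp only [hemb, Fin.coe_cast, Fin.val_succ, hi0] at this
      omega
    set L' : Fin (l - 1) → MvPolynomial (Fin 3) ℂ := fun i => L (emb i) with hL'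
    have hvan' : ∀ i j : Fin (l - 1), i ≠ j → ∀ u : Fin 3 → ℂ, u ≠ 0 →
        eval u (L' i) = 0 → eval u (L' j) = 0 → eval u H₁ = 0 := by
      intro i j hij u hu h1 h2
      have hne : emb i ≠ emb j := fun h => hij (hembinj _ _ h)
      have hLi0 : eval u (L i0) ≠ 0 := by
        intro hc
        exact not_li_forms (hhom i0) (hhom (emb i)) (hhom (emb j)) hu hc h1 h2
          (htriple i0 (emb i) (emb j) (fun h => hembne i h.symm)
            (fun h => hembne j h.symm) hne)
      have hFu : eval u F = 0 := hvan (emb i) (emb j) hne u hu h1 h2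
      rw [hfact, map_mul] at hFu
      rcases mul_eq_zero.1 hFu with h | h
      · exact absurd h hLi0
      · exact h
    have hH₁0 : H₁ = 0 := by
      apply ih (l - 1) (by omega) L' (fun i => hhom (emb i))
        (fun i j hij => hpair (emb i) (emb j) (fun h => hij (hembinj _ _ h)))
        (fun i j k hij hik hjk => htriple (emb i) (emb j) (emb k)
          (fun h => hij (hembinj _ _ h)) (fun h => hik (hembinj _ _ h))
          (fun h => hjk (hembinj _ _ h)))
        (by omega) H₁ hH₁hom hvan'
    rw [hfact, hH₁0, mul_zero]

end StarCfgAux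

/-- Let `l ≥ 2` and let `L 0, …, L (l-1)` be linear forms in `ℂ[x,y,z]`,
any two linearly independent and any three linearly independent over `ℂ`, with star
configuration points `p i j` (= the common projective zeros of `L i` and `L j`).
If `F` is homogeneous of degree `d < l - 1` and vanishes at every point `p i j`
(i.e. at every nonzero common zero of `L i` and `L j` for all `i ≠ j`), then `F = 0`. -/
theorem no_small_degree_curve_contains_star
    (l : ℕ) (hl : 2 ≤ l)
    (L : Fin l → MvPolynomial (Fin 3) ℂ)
    (hhom : ∀ i, (L i).IsHomogeneous 1)
    (hpair : ∀ i j : Fin l, i ≠ j → LinearIndependent ℂ ![L i, L j])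
    (htriple : ∀ i j k : Fin l, i ≠ j → i ≠ k → j ≠ k →
      LinearIndependent ℂ ![L i, L j, L k])
    (d : ℕ) (hd : d < l - 1)
    (F : MvPolynomial (Fin 3) ℂ) (hF : F.IsHomogeneous d)
    (hvan : ∀ i j : Fin l, i ≠ j → ∀ v : Fin 3 → ℂ, v ≠ 0 →
      eval v (L i) = 0 → eval v (L j) = 0 → eval v F = 0) :
    F = 0 :=
  StarCfgAux.main_aux d l hl L hhom hpair htriple hd F hF hvan
end

section
/- Let l ≥ 2 and let L_1, …, L_l be linear forms in ℂ[x,y,z] such that any three of them are linearly independent over ℂ, and let I_{X(l)} = ⋂_{1 ≤ i < j ≤ l} (L_i, L_j). Then for every integer d ≥ l − 1, the degree-d graded piece of I_{X(l)} has dimension dim_ℂ (I_{X(l)})_d = binom(d+2, 2) − binom(l, 2). -/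
open MvPolynomial

/-! ### Auxiliary results -/

section Aux

noncomputable def homogEquivFinsupp (σ : Type*) (K : Type*) [Field K] (d : ℕ) :
    (homogeneousSubmodule σ K d) ≃ₗ[K] ({u : σ →₀ ℕ | u.degree = d} →₀ K) :=
  (LinearEquiv.ofEq _ _ (homogeneousSubmodule_eq_finsupp_supported σ K d)).trans
    (AddMonoidAlgebra.supportedEquivFinsupp _)

noncomputable def degreeEquivSym (σ : Type*) [DecidableEq σ] (d : ℕ) :
    {u : σ →₀ ℕ // u.degree = d} ≃ Sym σ d where
  toFun u := ⟨u.1.toMultiset, by rw [Finsupp.card_toMultiset]; exact u.2⟩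
  invFun s := ⟨s.1.toFinsupp, by
    have := Multiset.toFinsupp_sum_eq s.1; rw [s.2] at this; exact this⟩
  left_inv u := by ext : 2; simp
  right_inv s := by ext : 2; simp

noncomputable instance (σ : Type*) [DecidableEq σ] [Fintype σ] (d : ℕ) :
    Fintype {u : σ →₀ ℕ // u.degree = d} :=
  Fintype.ofEquiv _ (degreeEquivSym σ d).symm

lemma card_degree_eq (d : ℕ) :
    Fintype.card {u : Fin 3 →₀ ℕ // u.degree = d} = (d + 2).choose 2 := by
  rw [Fintype.card_congr (degreeEquivSym (Fin 3) d), Sym.card_sym_eq_choose]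
  have h1 : Fintype.card (Fin 3) + d - 1 = d + 2 := by simp; omega
  rw [h1]
  have h2 : d + 2 - 2 = d := by omega
  rw [← Nat.choose_symm (by omega : 2 ≤ d + 2), h2]

noncomputable instance (d : ℕ) : Fintype ↑{u : Fin 3 →₀ ℕ | u.degree = d} :=
  inferInstanceAs (Fintype {u : Fin 3 →₀ ℕ // u.degree = d})

instance homogFD (d : ℕ) : FiniteDimensional ℂ (homogeneousSubmodule (Fin 3) ℂ d) :=
  Module.Finite.equiv (homogEquivFinsupp (Fin 3) ℂ d).symm

lemma finrank_homog (d : ℕ) :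
    Module.finrank ℂ (homogeneousSubmodule (Fin 3) ℂ d) = (d + 2).choose 2 := by
  rw [(homogEquivFinsupp (Fin 3) ℂ d).finrank_eq]
  rw [Module.finrank_finsupp_self]
  exact card_degree_eq d

lemma degree_one_eq_single {m : Fin 3 →₀ ℕ} (h : m.degree = 1) :
    ∃ s : Fin 3, m = Finsupp.single s 1 := by
  classical
  have hsum : m 0 + m 1 + m 2 = 1 := by
    have : ∑ i : Fin 3, m i = 1 := by
      rw [← h, Finsupp.degree_apply]
      rw [Finset.sum_subset (Finset.subset_univ m.support)]
      intro x _ hx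
      simpa using hx
    simpa [Fin.sum_univ_three] using this
  have : (m 0 = 1 ∧ m 1 = 0 ∧ m 2 = 0) ∨ (m 0 = 0 ∧ m 1 = 1 ∧ m 2 = 0)
      ∨ (m 0 = 0 ∧ m 1 = 0 ∧ m 2 = 1) := by omega
  rcases this with ⟨h0, h1, h2⟩ | ⟨h0, h1, h2⟩ | ⟨h0, h1, h2⟩
  · exact ⟨0, by ext i; fin_cases i <;> simp [h0, h1, h2]⟩
  · exact ⟨1, by ext i; fin_cases i <;> simp [h0, h1, h2]⟩
  · exact ⟨2, by ext i; fin_cases i <;> simp [h0, h1, h2]⟩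

/-- A homogeneous polynomial of degree 1 is a linear combination of the variables. -/
lemma hom1_repr {F : MvPolynomial (Fin 3) ℂ} (h : F.IsHomogeneous 1) :
    F = ∑ s : Fin 3, C (coeff (Finsupp.single s 1) F) * X s := by
  classical
  ext m
  rw [coeff_sum]
  simp only [coeff_C_mul, coeff_X']
  by_cases hm : ∃ s : Fin 3, m = Finsupp.single s 1
  · obtain ⟨s, rfl⟩ := hm
    rw [Finset.sum_eq_single s]
    · simp
    · intro t _ hts
      have : ¬ (Finsupp.single t 1 = Finsupp.single s 1) := by
        simp [Finsupp.single_left_inj (one_ne_zero), hts]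
      simp [this]
    · simp
  · have hc : coeff m F = 0 := by
      apply h.coeff_eq_zero
      intro hdeg
      exact hm (by
        obtain ⟨s, hs⟩ := degree_one_eq_single hdeg
        exact ⟨s, hs⟩)
    rw [hc]
    rw [Finset.sum_eq_zero]
    intro t _
    have : ¬ (Finsupp.single t 1 = m) := fun hh => hm ⟨t, hh.symm⟩
    simp [this]

lemma aeval_hom1 {F : MvPolynomial (Fin 3) ℂ} (h : F.IsHomogeneous 1) (p : Fin 3 → ℂ) :
    aeval p F = ∑ s : Fin 3, coeff (Finsupp.single s 1) F * p s := by
  conv_lhs => rw [hom1_repr h]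
  simp

/-- Evaluation of a degree-1 homogeneous polynomial, as a linear map in the point. -/
noncomputable def evalL (F : MvPolynomial (Fin 3) ℂ) (h : F.IsHomogeneous 1) :
    (Fin 3 → ℂ) →ₗ[ℂ] ℂ where
  toFun p := aeval p F
  map_add' p q := by simp [aeval_hom1 h, mul_add, Finset.sum_add_distrib]
  map_smul' a p := by
    simp [aeval_hom1 h, Finset.mul_sum]
    ring_nf
    apply Finset.sum_congr rfl
    intros; ring

lemma exists_common_zero (F G : MvPolynomial (Fin 3) ℂ)
    (hF : F.IsHomogeneous 1) (hG : G.IsHomogeneous 1) :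
    ∃ p : Fin 3 → ℂ, p ≠ 0 ∧ aeval p F = 0 ∧ aeval p G = 0 := by
  let f : (Fin 3 → ℂ) →ₗ[ℂ] (Fin 2 → ℂ) := LinearMap.pi ![evalL F hF, evalL G hG]
  have hk : LinearMap.ker f ≠ ⊥ := by
    apply LinearMap.ker_ne_bot_of_finrank_lt
    simp [Module.finrank_pi]
  obtain ⟨p, hp, hp0⟩ := Submodule.exists_mem_ne_zero_of_ne_bot hk
  refine ⟨p, hp0, ?_, ?_⟩
  · have := congrFun (LinearMap.mem_ker.mp hp) 0
    simpa [f, LinearMap.pi_apply, evalL] using this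
  · have := congrFun (LinearMap.mem_ker.mp hp) 1
    simpa [f, LinearMap.pi_apply, evalL] using this

lemma X_mem_span3 {F G H : MvPolynomial (Fin 3) ℂ}
    (hF : F.IsHomogeneous 1) (hG : G.IsHomogeneous 1) (hH : H.IsHomogeneous 1)
    (hind : LinearIndependent ℂ ![F, G, H]) (s : Fin 3) :
    ∃ a b c : ℂ, X s = a • F + b • G + c • H := by
  set V := homogeneousSubmodule (Fin 3) ℂ 1 with hV
  let v : Fin 3 → V := ![⟨F, hF⟩, ⟨G, hG⟩, ⟨H, hH⟩]
  have hcomp : (V.subtype) ∘ v = ![F, G, H] := by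
    funext i; fin_cases i <;> rfl
  have hiv : LinearIndependent ℂ v := by
    apply LinearIndependent.of_comp V.subtype
    rw [hcomp]; exact hind
  have hspan : Submodule.span ℂ (Set.range v) = ⊤ := by
    apply hiv.span_eq_top_of_card_eq_finrank
    rw [finrank_homog 1]
    simp
  have hX : (⟨X s, isHomogeneous_X ℂ s⟩ : V) ∈ Submodule.span ℂ (Set.range v) := by
    rw [hspan]; trivial
  rw [Finsupp.mem_span_range_iff_exists_finsupp] at hX
  obtain ⟨c, hc⟩ := hX
  have this' : ((c.sum fun i a => a • v i : V) : MvPolynomial (Fin 3) ℂ) = X s :=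
    congrArg Subtype.val hc
  refine ⟨c 0, c 1, c 2, ?_⟩
  rw [← this']
  rw [Finsupp.sum_fintype _ _ (by simp)]
  simp [v, Fin.sum_univ_three]

lemma aeval_eq_eval' (p : Fin 3 → ℂ) (F : MvPolynomial (Fin 3) ℂ) :
    aeval p F = eval p F := by
  rw [aeval_def, eval, Algebra.algebraMap_self]
  rfl

lemma sum_univ_eq_degree (u : Fin 3 →₀ ℕ) : ∑ s : Fin 3, u s = u.degree := by
  rw [Finsupp.degree_apply, Finset.sum_subset (Finset.subset_univ u.support)]
  intro x _ hx
  simpa using hx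

lemma aeval_homog_smul {A : Type*} [CommRing A] [Algebra ℂ A]
    {F : MvPolynomial (Fin 3) ℂ} {d : ℕ} (h : F.IsHomogeneous d)
    (c : Fin 3 → ℂ) (m : A) :
    aeval (fun s => c s • m) F = algebraMap ℂ A (eval c F) * m ^ d := by
  rw [aeval_def, eval₂_eq', eval_eq']
  rw [map_sum, Finset.sum_mul]
  apply Finset.sum_congr rfl
  intro u hu
  have hdeg : ∑ s : Fin 3, u s = d := by
    rw [sum_univ_eq_degree]
    rw [mem_support_iff] at hu
    have h2 := h hu
    rw [Finsupp.degree_eq_weight_one]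
    exact h2
  have : ∏ s : Fin 3, (c s • m) ^ u s
      = algebraMap ℂ A (∏ s : Fin 3, c s ^ u s) * m ^ d := by
    rw [← hdeg, ← Finset.prod_pow_eq_pow_sum, map_prod, ← Finset.prod_mul_distrib]
    apply Finset.prod_congr rfl
    intro s _
    rw [smul_pow, Algebra.smul_def, map_pow]
  rw [this, map_mul]
  ring

lemma mem_span_pair_of_eval_zero
    {Li Lj M : MvPolynomial (Fin 3) ℂ}
    (p : Fin 3 → ℂ) (hpi : aeval p Li = 0) (hpj : aeval p Lj = 0)
    (hpM : aeval p M = 1)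
    (hX : ∀ s : Fin 3, ∃ a b c : ℂ, X s = a • Li + b • Lj + c • M)
    {F : MvPolynomial (Fin 3) ℂ} {d : ℕ} (hF : F.IsHomogeneous d)
    (hFp : aeval p F = 0) : F ∈ Ideal.span {Li, Lj} := by
  rw [aeval_eq_eval'] at hFp
  classical
  set I := Ideal.span {Li, Lj} with hI
  have hXp : ∀ s : Fin 3, ∃ a b : ℂ, X s = a • Li + b • Lj + (p s) • M := by
    intro s
    obtain ⟨a, b, c, hs⟩ := hX s
    have : p s = c := by
      have := congrArg (aeval p) hs
      simpa [(aeval_eq_eval' _ _).symm.trans hpi, (aeval_eq_eval' _ _).symm.trans hpj, (aeval_eq_eval' _ _).symm.trans hpM] using this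
    exact ⟨a, b, by rw [this]; exact hs⟩
  choose a b hab using hXp
  let g : Fin 3 → MvPolynomial (Fin 3) ℂ := fun s => a s • Li + b s • Lj + (p s) • M
  have hg : (X : Fin 3 → MvPolynomial (Fin 3) ℂ) = g := funext hab
  let mk : MvPolynomial (Fin 3) ℂ →ₐ[ℂ] (MvPolynomial (Fin 3) ℂ ⧸ I) :=
    Ideal.Quotient.mkₐ ℂ I
  have hLiI : mk Li = 0 := by
    simp only [mk, Ideal.Quotient.mkₐ_eq_mk, Ideal.Quotient.eq_zero_iff_mem]
    exact Ideal.subset_span (by simp)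
  have hLjI : mk Lj = 0 := by
    simp only [mk, Ideal.Quotient.mkₐ_eq_mk, Ideal.Quotient.eq_zero_iff_mem]
    exact Ideal.subset_span (by simp)
  have key : mk F = 0 := by
    have h1 : F = aeval g F := by
      conv_lhs => rw [← aeval_X_left_apply F]
      rw [hg]
    rw [h1, comp_aeval_apply]
    have h2 : (fun s => mk (g s)) = fun s => (p s) • mk M := by
      funext s
      simp [g, hLiI, hLjI]
    rw [h2, aeval_homog_smul hF p (mk M), hFp, map_zero, zero_mul]
  have key2 : Ideal.Quotient.mk I F = 0 := by
    rw [← Ideal.Quotient.mkₐ_eq_mk ℂ I]; exact key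
  exact (Ideal.Quotient.eq_zero_iff_mem).mp key2

lemma eval_zero_of_mem_span {Li Lj : MvPolynomial (Fin 3) ℂ} (p : Fin 3 → ℂ)
    (hpi : aeval p Li = 0) (hpj : aeval p Lj = 0)
    {F : MvPolynomial (Fin 3) ℂ} (hF : F ∈ Ideal.span {Li, Lj}) :
    aeval p F = 0 := by
  have hle : Ideal.span {Li, Lj} ≤ RingHom.ker (aeval p (R := ℂ) (S₁ := ℂ)) := by
    rw [Ideal.span_le]
    rintro x hx
    simp only [Set.mem_insert_iff, Set.mem_singleton_iff] at hx
    rcases hx with rfl | rfl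
    · exact hpi
    · exact hpj
  exact hle hF

def pairEquivSigma (l : ℕ) : {q : Fin l × Fin l // q.1 < q.2} ≃ Σ j : Fin l, Fin j.val where
  toFun q := ⟨q.1.2, ⟨q.1.1, q.2⟩⟩
  invFun x := ⟨(⟨x.2.1, lt_trans x.2.2 x.1.isLt⟩, x.1), x.2.2⟩
  left_inv q := rfl
  right_inv x := rfl

lemma card_pairs (l : ℕ) :
    Fintype.card {q : Fin l × Fin l // q.1 < q.2} = l.choose 2 := by
  rw [Fintype.card_congr (pairEquivSigma l), Fintype.card_sigma]
  simp only [Fintype.card_fin]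
  rw [show (∑ x : Fin l, (x : ℕ)) = ∑ i ∈ Finset.range l, i from
    Fin.sum_univ_eq_sum_range (fun i => i) l]
  rw [Finset.sum_range_id, Nat.choose_two_right]

end Aux

set_option maxHeartbeats 1000000 in
set_option synthInstance.maxHeartbeats 200000 in
/-- For the defining ideal `I = ⋂_{i<j} (L i, L j)` of a star
configuration `X(l)` (linear forms `L 0, …, L (l-1)`, any two linearly independent,
any three linearly independent) and every `d ≥ l - 1`, the degree-`d` graded piece
`I_d = I ∩ S_d` has dimension `binom(d+2,2) - binom(l,2)`. -/
theorem star_configuration_ideal_dimension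
    (l : ℕ) (hl : 2 ≤ l)
    (L : Fin l → MvPolynomial (Fin 3) ℂ)
    (hhom : ∀ i, (L i).IsHomogeneous 1)
    (hpair : ∀ i j : Fin l, i ≠ j → LinearIndependent ℂ ![L i, L j])
    (htriple : ∀ i j k : Fin l, i ≠ j → i ≠ k → j ≠ k →
      LinearIndependent ℂ ![L i, L j, L k])
    (d : ℕ) (hd : l - 1 ≤ d) :
    Module.finrank ℂ
      ↥(Submodule.restrictScalars ℂ
          (⨅ (i : Fin l) (j : Fin l) (_ : i < j),
            Ideal.span {L i, L j} : Ideal (MvPolynomial (Fin 3) ℂ))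
        ⊓ homogeneousSubmodule (Fin 3) ℂ d)
      = (d + 2).choose 2 - l.choose 2 := by
  classical
  set P := {q : Fin l × Fin l // q.1 < q.2} with hP
  -- choose points
  have hexists : ∀ q : P, ∃ p : Fin 3 → ℂ,
      p ≠ 0 ∧ aeval p (L q.1.1) = 0 ∧ aeval p (L q.1.2) = 0 :=
    fun q => exists_common_zero _ _ (hhom q.1.1) (hhom q.1.2)
  choose pt hpt0 hpt1 hpt2 using hexists
  -- nonvanishing of other linear forms at the points
  have hnv : ∀ (q : P) (k : Fin l), k ≠ q.1.1 → k ≠ q.1.2 → aeval (pt q) (L k) ≠ 0 := by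
    intro q k hk1 hk2 hzero
    have hij : q.1.1 ≠ q.1.2 := ne_of_lt q.2
    have hind := htriple q.1.1 q.1.2 k hij (Ne.symm hk1) (Ne.symm hk2)
    apply hpt0 q
    funext s
    obtain ⟨a, b, c, hs⟩ := X_mem_span3 (hhom q.1.1) (hhom q.1.2) (hhom k) hind s
    have := congrArg (aeval (pt q)) hs
    simpa [(aeval_eq_eval' _ _).symm.trans (hpt1 q), (aeval_eq_eval' _ _).symm.trans (hpt2 q), (aeval_eq_eval' _ _).symm.trans hzero] using this
  -- vanishing characterization
  have key : ∀ (q : P) (F : MvPolynomial (Fin 3) ℂ), F.IsHomogeneous d →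
      (F ∈ Ideal.span {L q.1.1, L q.1.2} ↔ aeval (pt q) F = 0) := by
    intro q F hF
    constructor
    · exact fun h => eval_zero_of_mem_span (pt q) (hpt1 q) (hpt2 q) h
    · intro hFz
      obtain ⟨s0, hs0⟩ : ∃ s0, pt q s0 ≠ 0 := by
        by_contra h
        push_neg at h
        exact hpt0 q (funext h)
      set M : MvPolynomial (Fin 3) ℂ := C (pt q s0)⁻¹ * X s0 with hM
      have hMhom : M.IsHomogeneous 1 := isHomogeneous_C_mul_X _ _
      have hMp : aeval (pt q) M = 1 := by
        simp [hM, inv_mul_cancel₀ hs0]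
      have hij : q.1.1 ≠ q.1.2 := ne_of_lt q.2
      have hind : LinearIndependent ℂ ![L q.1.1, L q.1.2, M] := by
        rw [Fintype.linearIndependent_iff]
        intro g hg
        have hsum : g 0 • L q.1.1 + g 1 • L q.1.2 + g 2 • M = 0 := by
          simpa [Fin.sum_univ_three] using hg
        have hg2 : g 2 = 0 := by
          have := congrArg (aeval (pt q)) hsum
          simpa [(aeval_eq_eval' _ _).symm.trans (hpt1 q), (aeval_eq_eval' _ _).symm.trans (hpt2 q), (aeval_eq_eval' _ _).symm.trans hMp] using this
        have hg01 : g 0 = 0 ∧ g 1 = 0 := by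
          have hpair' := hpair q.1.1 q.1.2 hij
          rw [Fintype.linearIndependent_iff] at hpair'
          have h2 : ∑ i : Fin 2, (![g 0, g 1]) i • (![L q.1.1, L q.1.2]) i = 0 := by
            rw [hg2] at hsum
            simpa [Fin.sum_univ_two] using hsum
          exact ⟨hpair' ![g 0, g 1] h2 0, hpair' ![g 0, g 1] h2 1⟩
        intro i
        fin_cases i
        · exact hg01.1
        · exact hg01.2
        · exact hg2
      have hX := fun s => X_mem_span3 (hhom q.1.1) (hhom q.1.2) hMhom hind s
      exact mem_span_pair_of_eval_zero (pt q) (hpt1 q) (hpt2 q) hMp hX hF hFz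
  -- the evaluation linear map
  set Shom := homogeneousSubmodule (Fin 3) ℂ d with hShom
  let Ehat : MvPolynomial (Fin 3) ℂ →ₗ[ℂ] (P → ℂ) :=
    LinearMap.pi (fun q : P =>
      (aeval (pt q) : MvPolynomial (Fin 3) ℂ →ₐ[ℂ] ℂ).toLinearMap)
  let E : Shom →ₗ[ℂ] (P → ℂ) := Ehat.comp Shom.subtype
  -- identification of the graded piece with the kernel
  have hT : (Submodule.restrictScalars ℂ
          (⨅ (i : Fin l) (j : Fin l) (_ : i < j),
            Ideal.span {L i, L j} : Ideal (MvPolynomial (Fin 3) ℂ))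
        ⊓ Shom) = Submodule.map Shom.subtype (LinearMap.ker E) := by
    ext F
    simp only [Submodule.mem_inf, Submodule.restrictScalars_mem, Submodule.mem_map,
      LinearMap.mem_ker]
    constructor
    · rintro ⟨hFI, hFd⟩
      refine ⟨⟨F, hFd⟩, ?_, rfl⟩
      funext q
      have hmem : F ∈ Ideal.span {L q.1.1, L q.1.2} := by
        have h1 := (Submodule.mem_iInf _).mp hFI q.1.1
        have h2 := (Submodule.mem_iInf _).mp h1 q.1.2
        exact (Submodule.mem_iInf _).mp h2 q.2
      have := (key q F ((mem_homogeneousSubmodule _ _).mp hFd)).mp hmem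
      simpa [E, Ehat] using this
    · rintro ⟨⟨F, hFd⟩, hker, rfl⟩
      refine ⟨?_, hFd⟩
      rw [Submodule.mem_iInf]; intro i
      rw [Submodule.mem_iInf]; intro j
      rw [Submodule.mem_iInf]; intro hij
      apply (key ⟨(i, j), hij⟩ F ((mem_homogeneousSubmodule _ _).mp hFd)).mpr
      have := congrFun hker ⟨(i, j), hij⟩
      simpa [E, Ehat] using this
  -- surjectivity of E
  have hsingle : ∀ q0 : P, Pi.single q0 (1 : ℂ) ∈ LinearMap.range E := by
    intro q0
    obtain ⟨⟨i, j⟩, hij⟩ := q0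
    set q0 : P := ⟨(i, j), hij⟩ with hq0
    obtain ⟨s0, hs0⟩ : ∃ s0, pt q0 s0 ≠ 0 := by
      by_contra h
      push_neg at h
      exact hpt0 q0 (funext h)
    set t := Finset.univ.filter (fun k : Fin l => k ≠ i ∧ k ≠ j) with ht
    have hcardt : t.card = l - 2 := by
      have : t = Finset.univ \ {i, j} := by
        ext k
        simp [ht, and_comm]
      rw [this, Finset.card_sdiff_of_subset (Finset.subset_univ _)]
      rw [Finset.card_insert_of_notMem (by simp [ne_of_lt hij]), Finset.card_singleton]
      simp
    set G : MvPolynomial (Fin 3) ℂ := (X s0) ^ (d - (l - 2)) * ∏ k ∈ t, L k with hG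
    have hGhom : G.IsHomogeneous d := by
      have h1 : ((X s0 : MvPolynomial (Fin 3) ℂ) ^ (d - (l - 2))).IsHomogeneous (d - (l - 2)) :=
        isHomogeneous_X_pow _ _
      have h2 : (∏ k ∈ t, L k).IsHomogeneous (l - 2) := by
        have := MvPolynomial.IsHomogeneous.prod t L (fun _ => 1)
          (fun k _ => hhom k)
        simpa [hcardt] using this
      have := h1.mul h2
      have heq : d - (l - 2) + (l - 2) = d := by omega
      rwa [heq] at this
    -- value of E at G
    have hEG : ∀ q : P, q ≠ q0 → aeval (pt q) G = 0 := by
      intro q hq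
      obtain ⟨k, hk, hki, hkj⟩ : ∃ k, (k = q.1.1 ∨ k = q.1.2) ∧ k ≠ i ∧ k ≠ j := by
        obtain ⟨⟨u, v⟩, huv⟩ := q
        have huv' : u < v := huv
        have hne : ¬(u = i ∧ v = j) := by
          rintro ⟨h1, h2⟩
          apply hq
          rw [hq0]
          subst h1; subst h2
          rfl
        by_cases hui : u = i
        · refine ⟨v, Or.inr rfl, ?_, fun h => hne ⟨hui, h⟩⟩
          have : i < v := by rw [← hui]; exact huv'
          exact ne_of_gt this
        · by_cases huj : u = j
          · refine ⟨v, Or.inr rfl, ?_, ?_⟩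
            · intro h
              have h1 : u < i := by rw [← h]; exact huv'
              have h2 : i < u := by rw [huj]; exact hij
              exact absurd (lt_trans h1 h2) (lt_irrefl u)
            · have : j < v := by rw [← huj]; exact huv'
              exact ne_of_gt this
          · exact ⟨u, Or.inl rfl, hui, huj⟩
      have hkt : k ∈ t := by simp [ht, hki, hkj]
      have hLk : aeval (pt q) (L k) = 0 := by
        rcases hk with rfl | rfl
        · exact hpt1 q
        · exact hpt2 q
      rw [hG, map_mul, map_prod]
      rw [Finset.prod_eq_zero hkt hLk, mul_zero]
    set c : ℂ := (pt q0 s0) ^ (d - (l - 2)) * ∏ k ∈ t, aeval (pt q0) (L k) with hc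
    have hc0 : c ≠ 0 := by
      apply mul_ne_zero (pow_ne_zero _ hs0)
      rw [Finset.prod_ne_zero_iff]
      intro k hk
      rw [ht, Finset.mem_filter] at hk
      exact hnv q0 k hk.2.1 hk.2.2
    have hEGq0 : aeval (pt q0) G = c := by
      rw [hG, map_mul, map_prod, map_pow, aeval_X]
    refine ⟨c⁻¹ • ⟨G, hGhom⟩, ?_⟩
    rw [map_smul]
    funext q
    by_cases hq : q = q0
    · subst hq
      simp only [Pi.smul_apply, E, Ehat, LinearMap.comp_apply, LinearMap.pi_apply]
      rw [Pi.single_eq_same]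
      simp only [Submodule.coe_subtype, AlgHom.toLinearMap_apply]
      rw [hEGq0, smul_eq_mul, inv_mul_cancel₀ hc0]
    · simp only [Pi.smul_apply]
      rw [Pi.single_eq_of_ne hq]
      simp only [Pi.smul_apply, E, Ehat, LinearMap.comp_apply, LinearMap.pi_apply,
        Submodule.coe_subtype, AlgHom.toLinearMap_apply]
      rw [hEG q hq, smul_eq_mul, mul_zero]
  have hsurj : Function.Surjective E := by
    rw [← LinearMap.range_eq_top, eq_top_iff]
    intro v _
    have hv : v = ∑ q : P, v q • (Pi.single q (1 : ℂ) : P → ℂ) := by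
      funext q
      rw [Finset.sum_apply]
      rw [Finset.sum_eq_single q]
      · simp
      · intro t _ htq
        rw [Pi.smul_apply, Pi.single_eq_of_ne (Ne.symm htq), smul_zero]
      · simp
    rw [hv]
    exact Submodule.sum_mem _ (fun q _ => Submodule.smul_mem _ _ (hsingle q))
  -- rank-nullity
  have hrank := LinearMap.finrank_range_add_finrank_ker E
  rw [LinearMap.range_eq_top.mpr hsurj, finrank_top] at hrank
  have hranktop : Module.finrank ℂ (P → ℂ) = l.choose 2 := by
    rw [Module.finrank_pi]
    exact card_pairs l
  have hdom : Module.finrank ℂ Shom = (d + 2).choose 2 := finrank_homog d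
  have hker : Module.finrank ℂ (LinearMap.ker E) = (d + 2).choose 2 - l.choose 2 := by
    rw [hranktop, hdom] at hrank
    omega
  rw [hT, Submodule.finrank_map_subtype_eq]
  exact hker
end
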